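/- Let S, A, T, 𝒫 be as in the MDP context. Let V1, V2, V_Σ : S × 𝒫 → ℝ be mixture-affine and satisfy the generalized Bellman form with reward/discount pairs (R1, γ1), (R2, γ2), (R_Σ, γ_Σ) respectively. Suppose there exist c ∈ ℝ and weights w1 ≠ 0, w2 ≠ 0 with V_Σ(s,Π) = c + w1·V1(s,Π) + w2·V2(s,Π) for all s ∈ S and Π ∈ 𝒫. Fix (s,a) ∈ S × A and suppose the conflict condition holds for (V1, V2) at (s,a). Then γ1(s,a) = γ2(s,a) = γ_Σ(s,a). -/
import Mathlib


open scoped BigOperators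

/-- The one-step expected value `V̄(s,a,π) = E_{s' ~ T(s,a)}[V(s',π)]`. -/
noncomputable def Vbar {S A P : Type*} [Fintype S]
    (T : S → A → S → ℝ) (V : S → P → ℝ) (s : S) (a : A) (π : P) : ℝ :=
  ∑ s', T s a s' * V s' π

/-- `V` is mixture-affine with respect to the policy-mixing operation `mix`. -/
def MixAffine {S P : Type*} (mix : ℝ → P → P → P) (V : S → P → ℝ) : Prop :=
  ∀ (s : S) (β : ℝ), 0 ≤ β → β ≤ 1 → ∀ π ω : P,
    V s (mix β π ω) = β * V s π + (1 - β) * V s ω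

/-- `V` satisfies the generalized Bellman form with reward `R` and discount `γ`. -/
def BellmanForm {S A P : Type*} [Fintype S] (T : S → A → S → ℝ) (act : A → P → P)
    (V : S → P → ℝ) (R : S → A → ℝ) (γ : S → A → ℝ) : Prop :=
  ∀ (s : S) (a : A) (π : P), V s (act a π) = R s a + γ s a * Vbar T V s a π

/-- The conflict condition for `(V1, V2)` at `(s, a)`: there are policies `π, ω, l`
on which the one-step expected values of `V1` and `V2` are oppositely ordered, with
non-symmetric crossing points `β1 ≠ β2`. -/
def Conflict {S A P : Type*} [Fintype S]
    (T : S → A → S → ℝ) (V1 V2 : S → P → ℝ) (s : S) (a : A) : Prop :=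
  ∃ π ω l : P,
    Vbar T V1 s a π > Vbar T V1 s a l ∧ Vbar T V1 s a l > Vbar T V1 s a ω ∧
    Vbar T V2 s a ω > Vbar T V2 s a l ∧ Vbar T V2 s a l > Vbar T V2 s a π ∧
    (Vbar T V1 s a l - Vbar T V1 s a ω) / (Vbar T V1 s a π - Vbar T V1 s a ω) ≠
      (Vbar T V2 s a l - Vbar T V2 s a ω) / (Vbar T V2 s a π - Vbar T V2 s a ω)

/-- **Equal discounts under Markovian aggregation (Theorem 4, core computation).**
If `Vagg = c + w1·V1 + w2·V2` with nonzero weights, all three value functions are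
mixture-affine and satisfy generalized Bellman forms, and the conflict condition holds
for `(V1, V2)` at `(s, a)`, then all three discounts agree at `(s, a)`. -/
theorem discounts_equal_of_markovian_aggregation
    {S A P : Type*} [Fintype S] [Nonempty S] [Fintype A] [Nonempty A]
    (T : S → A → S → ℝ)
    (hT0 : ∀ s a s', 0 ≤ T s a s') (hT1 : ∀ s a, ∑ s', T s a s' = 1)
    (act : A → P → P) (mix : ℝ → P → P → P)
    (hact_mix : ∀ (a : A) (β : ℝ) (π ω : P), act a (mix β π ω) = mix β (act a π) (act a ω))
    (V1 V2 Vagg : S → P → ℝ)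
    (haff1 : MixAffine mix V1) (haff2 : MixAffine mix V2) (haffagg : MixAffine mix Vagg)
    (R1 R2 Ragg γ1 γ2 γagg : S → A → ℝ)
    (hB1 : BellmanForm T act V1 R1 γ1)
    (hB2 : BellmanForm T act V2 R2 γ2)
    (hBagg : BellmanForm T act Vagg Ragg γagg)
    (c w1 w2 : ℝ) (hw1 : w1 ≠ 0) (hw2 : w2 ≠ 0)
    (hagg : ∀ (s : S) (π : P), Vagg s π = c + w1 * V1 s π + w2 * V2 s π)
    (s : S) (a : A) (hconf : Conflict T V1 V2 s a) :
    γ1 s a = γ2 s a ∧ γ2 s a = γagg s a := by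
  obtain ⟨π, ω, l, h1πl, h1lω, h2ωl, h2lπ, hβ⟩ := hconf
  -- key equation: the aggregate combination is constant in the policy
  have key : ∀ ρ : P,
      w1 * (γ1 s a - γagg s a) * Vbar T V1 s a ρ
        + w2 * (γ2 s a - γagg s a) * Vbar T V2 s a ρ
      = Ragg s a + γagg s a * c - c - w1 * R1 s a - w2 * R2 s a := by
    intro ρ
    have hVρ : Vbar T Vagg s a ρ
        = c + w1 * Vbar T V1 s a ρ + w2 * Vbar T V2 s a ρ := by
      simp only [Vbar]
      have : ∀ s', T s a s' * Vagg s' ρ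
          = T s a s' * c + w1 * (T s a s' * V1 s' ρ) + w2 * (T s a s' * V2 s' ρ) := by
        intro s'; rw [hagg]; ring
      rw [Finset.sum_congr rfl fun s' _ => this s']
      rw [Finset.sum_add_distrib, Finset.sum_add_distrib, ← Finset.sum_mul,
        ← Finset.mul_sum, ← Finset.mul_sum, hT1]
      ring
    have e1 := hB1 s a ρ
    have e2 := hB2 s a ρ
    have eg := hBagg s a ρ
    have eh := hagg s (act a ρ)
    rw [hVρ] at eg
    rw [e1, e2] at eh
    rw [eh] at eg
    linear_combination eg
  set p1 := Vbar T V1 s a π with hp1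
  set l1 := Vbar T V1 s a l with hl1
  set o1 := Vbar T V1 s a ω with ho1
  set p2 := Vbar T V2 s a π with hp2
  set l2 := Vbar T V2 s a l with hl2
  set o2 := Vbar T V2 s a ω with ho2
  have kπ := key π
  have kl := key l
  have kω := key ω
  set A1 := w1 * (γ1 s a - γagg s a) with hA1
  set A2 := w2 * (γ2 s a - γagg s a) with hA2
  have ed : A1 * (p1 - o1) + A2 * (p2 - o2) = 0 := by linarith
  have ee : A1 * (l1 - o1) + A2 * (l2 - o2) = 0 := by linarith
  have hd1 : p1 - o1 > 0 := by linarith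
  have hd2 : p2 - o2 < 0 := by linarith
  have hdet : (l1 - o1) * (p2 - o2) - (l2 - o2) * (p1 - o1) ≠ 0 := by
    intro h
    apply hβ
    rw [div_eq_div_iff (by linarith) (by linarith)]
    linarith
  have hA1z : A1 = 0 := by
    have : A1 * ((l1 - o1) * (p2 - o2) - (l2 - o2) * (p1 - o1)) = 0 := by nlinarith
    rcases mul_eq_zero.mp this with h | h
    · exact h
    · exact absurd h hdet
  have hA2z : A2 = 0 := by
    have : A2 * ((l1 - o1) * (p2 - o2) - (l2 - o2) * (p1 - o1)) = 0 := by nlinarith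
    rcases mul_eq_zero.mp this with h | h
    · exact h
    · exact absurd h hdet
  have h1 : γ1 s a = γagg s a := by
    have := mul_eq_zero.mp hA1z
    rcases this with h | h
    · exact absurd h hw1
    · linarith
  have h2 : γ2 s a = γagg s a := by
    have := mul_eq_zero.mp hA2z
    rcases this with h | h
    · exact absurd h hw2
    · linarith
  exact ⟨h1.trans h2.symm, h2⟩
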